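/- Let G = (L, Σ, δ, O) be a POMDP, T ⊆ L, and l ∈ L. If there exists an observation-based strategy that is positive winning for Safe(T) from l, then there exists a pure observation-based finite-memory strategy with memory of size at most (|L| + 1) · 2^{|L|} that is positive winning for Safe(T) from l. -/

import Mathlib

open scoped ENNReal

/-- A partially-observable Markov decision process (POMDP) with states `L`,
actions `A` and observations `O`: a probabilistic transition function and an
observation function (the observations partition the state space). -/
structure POMDP (L : Type) (A : Type) (O : Type) where
  δ : L → A → PMF L
  obs : L → O

namespace POMDP

variable {L A O : Type}

/-- A (randomized) strategy: given the initial state and the history of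
(action, state) steps played so far, it chooses a distribution on actions. -/
abbrev Strategy (L A : Type) := L → List (A × L) → PMF A

/-- The sequence of states visited along a finite prefix. -/
def statesOf (l : L) (h : List (A × L)) : List L := l :: h.map Prod.snd

/-- Auxiliary probability of a finite prefix, for a strategy `π` given as a
function of the remaining history. -/
noncomputable def prefProbAux (M : POMDP L A O) :
    (List (A × L) → PMF A) → L → List (A × L) → ℝ≥0∞
  | _, _, [] => 1
  | π, l, (a, l') :: h =>
      π [] a * M.δ l a l' * M.prefProbAux (fun h' => π ((a, l') :: h')) l' h

/-- The probability, under strategy `α` from state `l`, that the play starts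
with the finite prefix `h` of (action, state) steps. -/
noncomputable def prefProb (M : POMDP L A O) (α : Strategy L A) (l : L)
    (h : List (A × L)) : ℝ≥0∞ :=
  M.prefProbAux (α l) l h

/-- A prefix is consistent with `α` from `l` if it has positive probability. -/
def Consistent (M : POMDP L A O) (α : Strategy L A) (l : L) (h : List (A × L)) : Prop :=
  0 < M.prefProb α l h

/-- The probability, under strategy `α` from state `l`, that the length-`n`
prefix of the play satisfies the predicate `P`. -/
noncomputable def horizonProb (M : POMDP L A O) [Fintype L] [Fintype A]
    (α : Strategy L A) (l : L) (n : ℕ) (P : List (A × L) → Prop) : ℝ≥0∞ :=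
  ∑ f : Fin n → A × L,
    Set.indicator {g : Fin n → A × L | P (List.ofFn g)}
      (fun g => M.prefProb α l (List.ofFn g)) f

/-- `Pr_l^α(Reach(T))`: probability that the play visits a state of `T`
(as the increasing limit of the finite-horizon reachability probabilities). -/
noncomputable def reachProb (M : POMDP L A O) [Fintype L] [Fintype A]
    (α : Strategy L A) (l : L) (T : Set L) : ℝ≥0∞ :=
  ⨆ n, M.horizonProb α l n (fun h => ∃ s ∈ statesOf l h, s ∈ T)

/-- `Pr_l^α(Safe(T))`: probability that all states of the play lie in `T`
(as the decreasing limit of the finite-horizon safety probabilities). -/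
noncomputable def safeProb (M : POMDP L A O) [Fintype L] [Fintype A]
    (α : Strategy L A) (l : L) (T : Set L) : ℝ≥0∞ :=
  ⨅ n, M.horizonProb α l n (fun h => ∀ s ∈ statesOf l h, s ∈ T)

/-- `Pr_l^α(Until(T₁,T₂))`: probability that the play visits `T₂` at some
position `k` with all positions `≤ k` in `T₁`. -/
noncomputable def untilProb (M : POMDP L A O) [Fintype L] [Fintype A]
    (α : Strategy L A) (l : L) (T₁ T₂ : Set L) : ℝ≥0∞ :=
  ⨆ n, M.horizonProb α l n (fun h => ∃ k, ∃ hk : k < (statesOf l h).length,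
      (statesOf l h).get ⟨k, hk⟩ ∈ T₂ ∧
      ∀ j, ∀ hj : j < (statesOf l h).length, j ≤ k → (statesOf l h).get ⟨j, hj⟩ ∈ T₁)

/-- `Pr_l^α(coBüchi(T))`: probability that from some point on all states of
the play lie in `T`. -/
noncomputable def coBuchiProb (M : POMDP L A O) [Fintype L] [Fintype A]
    (α : Strategy L A) (l : L) (T : Set L) : ℝ≥0∞ :=
  ⨆ k, ⨅ n, M.horizonProb α l n (fun h =>
    ∀ j, ∀ hj : j < (statesOf l h).length, k ≤ j → (statesOf l h).get ⟨j, hj⟩ ∈ T)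

/-- `Pr_l^α(Büchi(T))`: probability that the play visits `T` infinitely often. -/
noncomputable def buchiProb (M : POMDP L A O) [Fintype L] [Fintype A]
    (α : Strategy L A) (l : L) (T : Set L) : ℝ≥0∞ :=
  ⨅ k, ⨆ n, M.horizonProb α l n (fun h =>
    ∃ j, ∃ hj : j < (statesOf l h).length, k ≤ j ∧ (statesOf l h).get ⟨j, hj⟩ ∈ T)

/-- A strategy is observation-based if it plays the same distribution after any
two prefixes with the same sequences of observations and of actions. -/
def ObservationBased (M : POMDP L A O) (α : Strategy L A) : Prop :=
  ∀ l l' (h h' : List (A × L)), M.obs l = M.obs l' →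
    h.map Prod.fst = h'.map Prod.fst →
    h.map (fun p => M.obs p.2) = h'.map (fun p => M.obs p.2) →
    α l h = α l' h'

/-- A strategy is pure if it always plays a Dirac distribution. -/
def PureStrategy (α : Strategy L A) : Prop := ∀ l h, ∃ a, α l h = PMF.pure a

/-- Edge of the underlying graph of the POMDP. -/
def Edge (M : POMDP L A O) (l l' : L) : Prop := ∃ a, 0 < M.δ l a l'

/-- Reachability in the underlying graph of the POMDP. -/
def ReachableFrom (M : POMDP L A O) (l l' : L) : Prop :=
  Relation.ReflTransGen M.Edge l l'

/-- The memory state reached by a memory-update function `u` (together with the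
current state) after running through a prefix. -/
def memRun (M : POMDP L A O) {Mem : Type} (u : Mem → O → A → Mem) :
    Mem → L → List (A × L) → Mem × L
  | m, l, [] => (m, l)
  | m, l, (a, l') :: h => M.memRun u (u m (M.obs l) a) l' h

/-- The (observation-based) strategy induced by a finite-memory machine given by
memory-update function `u`, next-action function `next` and initial memory `m0`. -/
def fmStrategy (M : POMDP L A O) {Mem : Type} (u : Mem → O → A → Mem)
    (next : Mem → O → PMF A) (m0 : Mem) : Strategy L A :=
  fun l h =>
    let p := M.memRun u m0 l h
    next p.1 (M.obs p.2)

/-- The distribution choosing `x` and `y` with probability 1/2 each. -/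
noncomputable def half (x y : L) : PMF L :=
  (PMF.uniformOfFintype Bool).map (fun b => if b then x else y)

end POMDP

set_option linter.unusedSectionVars false
set_option linter.deprecated false
namespace POMDP

open Classical

variable {L A O : Type} [Fintype L] [Fintype A] (M : POMDP L A O) (T : Set L)

/-- The final state of a finite prefix started in `t`. -/
def endSt : L → List (A × L) → L
  | t, [] => t
  | _, (_, t') :: g => endSt t' g

@[simp] lemma endSt_nil (t : L) : endSt t ([] : List (A × L)) = t := rfl

@[simp] lemma endSt_cons (t t' : L) (a : A) (g : List (A × L)) :
    endSt t ((a, t') :: g) = endSt t' g := rfl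

lemma endSt_append (t : L) (h g : List (A × L)) :
    endSt t (h ++ g) = endSt (endSt t h) g := by
  induction h generalizing t with
  | nil => rfl
  | cons p h ih => cases p; simp [ih]

@[simp] lemma statesOf_nil (t : L) : statesOf t ([] : List (A × L)) = [t] := rfl

lemma statesOf_cons (t t' : L) (a : A) (g : List (A × L)) :
    statesOf t ((a, t') :: g) = t :: statesOf t' g := rfl

lemma statesOf_append (t : L) (h g : List (A × L)) :
    statesOf t (h ++ g) = statesOf t h ++ g.map Prod.snd := by
  simp [statesOf]

lemma endSt_mem_statesOf (t : L) (h : List (A × L)) : endSt t h ∈ statesOf t h := by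
  induction h generalizing t with
  | nil => simp
  | cons p h ih => cases p with | mk a t' => simp [statesOf_cons, endSt_cons]
                                             right
                                             have := ih t'
                                             simpa [statesOf] using this

@[simp] lemma prefProbAux_nil (π : List (A × L) → PMF A) (t : L) :
    M.prefProbAux π t [] = 1 := rfl

@[simp] lemma prefProbAux_cons (π : List (A × L) → PMF A) (t t' : L) (a : A)
    (h : List (A × L)) :
    M.prefProbAux π t ((a, t') :: h) =
      π [] a * M.δ t a t' * M.prefProbAux (fun h' => π ((a, t') :: h')) t' h := rfl

lemma prefProbAux_le_one (π : List (A × L) → PMF A) (t : L) (h : List (A × L)) :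
    M.prefProbAux π t h ≤ 1 := by
  induction h generalizing π t with
  | nil => simp
  | cons p h ih =>
      cases p with | mk a t' =>
      simp only [prefProbAux_cons]
      calc (π [] : PMF A) a * M.δ t a t' * M.prefProbAux (fun h' => π ((a, t') :: h')) t' h
          ≤ 1 * 1 * 1 := by
            gcongr <;> first | exact PMF.coe_le_one _ _ | exact ih _ _
        _ = 1 := by simp

lemma prefProbAux_append (π : List (A × L) → PMF A) (t : L) (h g : List (A × L)) :
    M.prefProbAux π t (h ++ g) =
      M.prefProbAux π t h * M.prefProbAux (fun g' => π (h ++ g')) (endSt t h) g := by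
  induction h generalizing π t with
  | nil => simp
  | cons p h ih =>
      cases p with | mk a t' =>
      simp only [List.cons_append, prefProbAux_cons, endSt_cons]
      rw [ih]
      ring

lemma sum_pmf_mul (σ : PMF A) (t : L) :
    ∑ p : A × L, σ p.1 * M.δ t p.1 p.2 = 1 := by
  rw [Fintype.sum_prod_type]
  have : ∀ a : A, ∑ s : L, σ a * M.δ t a s = σ a := by
    intro a
    rw [← Finset.mul_sum, ← tsum_fintype (L := SummationFilter.unconditional _), (M.δ t a).tsum_coe, mul_one]
  rw [Finset.sum_congr rfl (fun a _ => this a), ← tsum_fintype (L := SummationFilter.unconditional _), σ.tsum_coe]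

lemma sum_prefProbAux_eq_one (n : ℕ) :
    ∀ (π : List (A × L) → PMF A) (t : L),
      ∑ f : Fin n → A × L, M.prefProbAux π t (List.ofFn f) = 1 := by
  induction n with
  | zero => intro π t; simp
  | succ n ih =>
      intro π t
      rw [← Equiv.sum_comp (Fin.consEquiv fun _ : Fin (n + 1) => A × L)
        (fun f => M.prefProbAux π t (List.ofFn f))]
      have hofn : ∀ (p : A × L) (g : Fin n → A × L),
          List.ofFn ((Fin.consEquiv fun _ : Fin (n + 1) => A × L) (p, g)) = p :: List.ofFn g := by
        intro p g
        rw [List.ofFn_succ]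
        simp [Fin.consEquiv]
      rw [Fintype.sum_prod_type]
      calc ∑ p : A × L, ∑ g : Fin n → A × L,
            M.prefProbAux π t (List.ofFn ((Fin.consEquiv fun _ : Fin (n + 1) => A × L) (p, g)))
          = ∑ p : A × L, ∑ g : Fin n → A × L,
              (π [] p.1 * M.δ t p.1 p.2) *
                M.prefProbAux (fun h' => π (p :: h')) p.2 (List.ofFn g) := by
            refine Finset.sum_congr rfl fun p _ => Finset.sum_congr rfl fun g _ => ?_
            rw [hofn]
            cases p with | mk a t' => simp [mul_assoc]
        _ = ∑ p : A × L, (π [] p.1 * M.δ t p.1 p.2) := by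
            refine Finset.sum_congr rfl fun p _ => ?_
            rw [← Finset.mul_sum, ih _ p.2, mul_one]
        _ = 1 := sum_pmf_mul M (π []) t

end POMDP

namespace POMDP
open Classical

variable {L A O : Type} [Fintype L] [Fintype A] (M : POMDP L A O) (T : Set L)

/-- Finite-horizon safety value for a "history-suffix" strategy `σ` from `t`. -/
noncomputable def safeH (σ : List (A × L) → PMF A) (t : L) (n : ℕ) : ℝ≥0∞ :=
  ∑ f : Fin n → A × L,
    if ∀ x ∈ statesOf t (List.ofFn f), x ∈ T then M.prefProbAux σ t (List.ofFn f) else 0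

lemma safeH_zero (σ : List (A × L) → PMF A) (t : L) :
    M.safeH T σ t 0 = if t ∈ T then 1 else 0 := by
  rw [safeH]
  rw [Fintype.sum_unique]
  simp

lemma safeH_succ (σ : List (A × L) → PMF A) (t : L) (n : ℕ) :
    M.safeH T σ t (n + 1) =
      if t ∈ T then
        ∑ p : A × L, σ [] p.1 * M.δ t p.1 p.2 *
          M.safeH T (fun g => σ (p :: g)) p.2 n
      else 0 := by
  rw [safeH, ← Equiv.sum_comp (Fin.consEquiv fun _ : Fin (n + 1) => A × L), Fintype.sum_prod_type]
  have hofn : ∀ (p : A × L) (g : Fin n → A × L),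
      List.ofFn ((Fin.consEquiv fun _ : Fin (n + 1) => A × L) (p, g)) = p :: List.ofFn g := by
    intro p g; rw [List.ofFn_succ]; simp [Fin.consEquiv]
  by_cases ht : t ∈ T
  · simp only [if_pos ht]
    refine Finset.sum_congr rfl fun p _ => ?_
    cases p with | mk a t' =>
    rw [safeH, Finset.mul_sum]
    refine Finset.sum_congr rfl fun g _ => ?_
    rw [hofn, statesOf_cons, prefProbAux_cons]
    by_cases hc : ∀ x ∈ statesOf t' (List.ofFn g), x ∈ T
    · rw [if_pos, if_pos hc, mul_assoc]
      intro x hx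
      rcases List.mem_cons.1 hx with rfl | hx
      · exact ht
      · exact hc x hx
    · rw [if_neg, if_neg hc, mul_zero]
      intro hcon
      exact hc fun x hx => hcon x (List.mem_cons_of_mem _ hx)
  · simp only [if_neg ht]
    refine Finset.sum_eq_zero fun p _ => Finset.sum_eq_zero fun g _ => ?_
    cases p with | mk a t' =>
    rw [hofn, if_neg]
    intro hcon
    exact ht (hcon t (by simp [statesOf_cons]))

lemma safeH_le_one (σ : List (A × L) → PMF A) (t : L) (n : ℕ) :
    M.safeH T σ t n ≤ 1 := by
  calc M.safeH T σ t n ≤ ∑ f : Fin n → A × L, M.prefProbAux σ t (List.ofFn f) := by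
        refine Finset.sum_le_sum fun f _ => ?_
        split_ifs with h
        · exact le_rfl
        · exact zero_le'
    _ = 1 := M.sum_prefProbAux_eq_one n σ t

lemma safeH_of_not_mem (σ : List (A × L) → PMF A) (t : L) (n : ℕ) (ht : t ∉ T) :
    M.safeH T σ t n = 0 := by
  cases n with
  | zero => rw [safeH_zero, if_neg ht]
  | succ n => rw [safeH_succ, if_neg ht]

lemma sum_pmf_mul_const_le (σ : PMF A) (t : L) (F : A × L → ℝ≥0∞)
    (hF : ∀ p, F p ≤ 1) : ∑ p : A × L, σ p.1 * M.δ t p.1 p.2 * F p ≤ 1 := by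
  calc ∑ p : A × L, σ p.1 * M.δ t p.1 p.2 * F p
      ≤ ∑ p : A × L, σ p.1 * M.δ t p.1 p.2 := by
        refine Finset.sum_le_sum fun p _ => ?_
        calc σ p.1 * M.δ t p.1 p.2 * F p ≤ σ p.1 * M.δ t p.1 p.2 * 1 := by gcongr; exact hF p
          _ = σ p.1 * M.δ t p.1 p.2 := mul_one _
    _ = 1 := M.sum_pmf_mul σ t

lemma safeH_succ_le (σ : List (A × L) → PMF A) (t : L) (n : ℕ) :
    M.safeH T σ t (n + 1) ≤ M.safeH T σ t n := by
  induction n generalizing σ t with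
  | zero =>
      rw [safeH_succ, safeH_zero]
      split_ifs with ht
      · exact M.sum_pmf_mul_const_le (σ []) t _ fun p => M.safeH_le_one T _ _ _
      · exact le_rfl
  | succ n ih =>
      rw [M.safeH_succ T σ t (n+1), M.safeH_succ T σ t n]
      split_ifs with ht
      · refine Finset.sum_le_sum fun p _ => ?_
        gcongr
        exact ih _ _
      · exact le_rfl

lemma safeH_antitone (σ : List (A × L) → PMF A) (t : L) :
    Antitone (M.safeH T σ t) :=
  antitone_nat_of_succ_le fun n => M.safeH_succ_le T σ t n

lemma horizonProb_safe_eq (α : Strategy L A) (t : L) (n : ℕ) :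
    M.horizonProb α t n (fun h => ∀ s ∈ statesOf t h, s ∈ T) = M.safeH T (α t) t n := by
  rw [horizonProb, safeH]
  refine Finset.sum_congr rfl fun f _ => ?_
  rw [Set.indicator_apply]
  simp only [Set.mem_setOf_eq, prefProb]

lemma safeH_add (n : ℕ) :
    ∀ (m : ℕ) (σ : List (A × L) → PMF A) (t : L),
      M.safeH T σ t (n + m) =
        ∑ f : Fin n → A × L,
          if ∀ x ∈ statesOf t (List.ofFn f), x ∈ T then
            M.prefProbAux σ t (List.ofFn f) *
              M.safeH T (fun g => σ (List.ofFn f ++ g)) (endSt t (List.ofFn f)) m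
          else 0 := by
  induction n with
  | zero =>
      intro m σ t
      rw [Fintype.sum_unique]
      simp only [List.ofFn_zero, statesOf_nil, endSt_nil, prefProbAux_nil, one_mul,
        List.nil_append, List.mem_singleton, forall_eq, zero_add]
      split_ifs with ht
      · rfl
      · exact M.safeH_of_not_mem T σ t m ht
  | succ n ih =>
      intro m σ t
      have harith : n + 1 + m = (n + m) + 1 := by omega
      rw [harith, ← Equiv.sum_comp (Fin.consEquiv fun _ : Fin (n + 1) => A × L), Fintype.sum_prod_type,
        safeH_succ]
      have hofn : ∀ (p : A × L) (g : Fin n → A × L),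
          List.ofFn ((Fin.consEquiv fun _ : Fin (n + 1) => A × L) (p, g)) = p :: List.ofFn g := by
        intro p g; rw [List.ofFn_succ]; simp [Fin.consEquiv]
      by_cases ht : t ∈ T
      · rw [if_pos ht]
        refine Finset.sum_congr rfl fun p _ => ?_
        cases p with | mk a t' =>
        rw [ih m (fun g => σ ((a, t') :: g)) t', Finset.mul_sum]
        refine Finset.sum_congr rfl fun g _ => ?_
        rw [hofn, statesOf_cons, prefProbAux_cons, endSt_cons]
        by_cases hc : ∀ x ∈ statesOf t' (List.ofFn g), x ∈ T
        · rw [if_pos hc, if_pos]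
          · simp only [List.cons_append]
            ring
          · intro x hx
            rcases List.mem_cons.1 hx with rfl | hx
            · exact ht
            · exact hc x hx
        · rw [if_neg hc, if_neg, mul_zero]
          intro hcon
          exact hc fun x hx => hcon x (List.mem_cons_of_mem _ hx)
      · rw [if_neg ht]
        refine (Finset.sum_eq_zero fun p _ => Finset.sum_eq_zero fun g _ => ?_).symm
        cases p with | mk a t' =>
        simp only [hofn]
        rw [if_neg]
        intro hcon
        exact ht (hcon t (by simp [statesOf_cons]))

end POMDP

namespace POMDP

open Classical

variable {L A O : Type} [Fintype L] [Fintype A] (M : POMDP L A O) (T : Set L)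

/-- Post-set of a belief support under an action. -/
def post (B : Set L) (a : A) : Set L := {t | ∃ s ∈ B, M.δ s a t ≠ 0}

/-- Refinement of the post-set by an observation. -/
def csplit (B : Set L) (a : A) (o : O) : Set L := {t | t ∈ M.post B a ∧ M.obs t = o}

/-- Decreasing sequence approximating the winning belief supports for
almost-sure safety. -/
def Cseq (M : POMDP L A O) (T : Set L) : ℕ → Set (Set L)
  | 0 => {B | B ⊆ T}
  | k + 1 => {B | B ⊆ T ∧ ∃ a, M.post B a ⊆ T ∧
      ∀ o, (M.csplit B a o).Nonempty → M.csplit B a o ∈ Cseq M T k}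

lemma Cseq_subset_T {B : Set L} {k : ℕ} (hB : B ∈ Cseq M T k) : B ⊆ T := by
  cases k with
  | zero => exact hB
  | succ k => exact hB.1

lemma Cseq_succ_subset (k : ℕ) : Cseq M T (k + 1) ⊆ Cseq M T k := by
  induction k with
  | zero => intro B hB; exact hB.1
  | succ k ih =>
      rintro B ⟨hBT, a, ha, hsp⟩
      exact ⟨hBT, a, ha, fun o ho => ih (hsp o ho)⟩

lemma Cseq_antitone {k k' : ℕ} (h : k ≤ k') : Cseq M T k' ⊆ Cseq M T k := by
  induction h with
  | refl => exact fun _ h => h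
  | step _ ih => exact fun B hB => ih (M.Cseq_succ_subset T _ hB)

/-- Winning belief supports for almost-sure safety: the limit of `Cseq`. -/
def Cinf (M : POMDP L A O) (T : Set L) : Set (Set L) := ⋂ k, Cseq M T k

lemma Cinf_subset_T {B : Set L} (hB : B ∈ Cinf M T) : B ⊆ T :=
  M.Cseq_subset_T T (Set.mem_iInter.1 hB 0)

lemma Cinf_step {B : Set L} (hB : B ∈ Cinf M T) :
    ∃ a, M.post B a ⊆ T ∧
      ∀ o, (M.csplit B a o).Nonempty → M.csplit B a o ∈ Cinf M T := by
  have h1 : ∀ k, B ∈ Cseq M T (k + 1) := fun k => Set.mem_iInter.1 hB (k + 1)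
  choose f hf1 hf2 using fun k => (h1 k).2
  obtain ⟨a, ha⟩ := Finite.exists_infinite_fiber f
  have hmem : ∀ k, ∃ k' ≥ k, f k' = a := by
    intro k
    by_contra hcon
    push_neg at hcon
    have hsub : (f ⁻¹' {a}) ⊆ {j | j < k} := by
      intro j hj
      simp only [Set.mem_preimage, Set.mem_singleton_iff] at hj
      simp only [Set.mem_setOf_eq]
      exact lt_of_not_ge fun hge => hcon j hge hj
    exact (Set.Finite.subset (Set.finite_Iio k) hsub).not_infinite
      (Set.infinite_coe_iff.1 ha)
  obtain ⟨k0, _, hk0⟩ := hmem 0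
  refine ⟨a, hk0 ▸ hf1 k0, fun o ho => Set.mem_iInter.2 fun k => ?_⟩
  obtain ⟨k', hk', hfk'⟩ := hmem k
  have h2 := hf2 k'
  rw [hfk'] at h2
  exact M.Cseq_antitone T hk' (h2 o ho)

/-- There is a uniform bound on the rank of belief supports outside `Cinf`. -/
lemma exists_uniform_rank : ∃ R : ℕ, ∀ B : Set L, B ∉ Cinf M T → B ∉ Cseq M T R := by
  have hfin : (Set.range fun B : Set L =>
      if h : B ∉ Cinf M T then Nat.find (by
        simpa [Cinf, Set.mem_iInter, not_forall] using h) else 0).Finite :=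
    Set.finite_range _
  obtain ⟨R, hR⟩ := hfin.bddAbove
  refine ⟨R, fun B hB hBR => ?_⟩
  have hex : ∃ k, B ∉ Cseq M T k := by
    simpa [Cinf, Set.mem_iInter, not_forall] using hB
  have h1 : (if h : B ∉ Cinf M T then Nat.find (by
      simpa [Cinf, Set.mem_iInter, not_forall] using h) else 0) ≤ R :=
    hR (Set.mem_range_self B)
  rw [dif_pos hB] at h1
  exact Nat.find_spec hex (M.Cseq_antitone T h1 hBR)

/-- A history-suffix strategy is observation-based. -/
def ObsB (M : POMDP L A O) (σ : List (A × L) → PMF A) : Prop :=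
  ∀ h h' : List (A × L), h.map Prod.fst = h'.map Prod.fst →
    h.map (fun p => M.obs p.2) = h'.map (fun p => M.obs p.2) → σ h = σ h'

lemma ObsB_append {σ : List (A × L) → PMF A} (hσ : M.ObsB σ) (h : List (A × L)) :
    M.ObsB (fun g => σ (h ++ g)) := by
  intro g g' h1 h2
  exact hσ (h ++ g) (h ++ g') (by simp [h1]) (by simp [h2])

/-- A positive lower bound on the positive transition probabilities. -/
lemma exists_pmin [Nonempty A] (l : L) :
    ∃ c : ℝ≥0∞, 0 < c ∧ c ≤ 1 ∧ ∀ s a t, M.δ s a t ≠ 0 → c ≤ M.δ s a t := by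
  set F : Finset ℝ≥0∞ := (Finset.univ.filter
    (fun x : L × A × L => M.δ x.1 x.2.1 x.2.2 ≠ 0)).image
      (fun x => M.δ x.1 x.2.1 x.2.2) with hF
  have hne : F.Nonempty := by
    obtain ⟨t, ht⟩ := (M.δ l (Classical.arbitrary A)).support_nonempty
    exact ⟨M.δ l (Classical.arbitrary A) t, Finset.mem_image.2
      ⟨⟨l, Classical.arbitrary A, t⟩, Finset.mem_filter.2 ⟨Finset.mem_univ _, ht⟩, rfl⟩⟩
  refine ⟨F.min' hne, ?_, ?_, ?_⟩
  · rcases Finset.mem_image.1 (F.min'_mem hne) with ⟨x, hx, hx2⟩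
    have := (Finset.mem_filter.1 hx).2
    rw [← hx2]
    exact pos_iff_ne_zero.2 this
  · rcases Finset.mem_image.1 (F.min'_mem hne) with ⟨x, _, hx2⟩
    rw [← hx2]
    exact PMF.coe_le_one _ _
  · intro s a t hδ
    exact F.min'_le _ (Finset.mem_image.2
      ⟨⟨s, a, t⟩, Finset.mem_filter.2 ⟨Finset.mem_univ _, hδ⟩, rfl⟩)

end POMDP

namespace POMDP

open Classical

variable {L A O : Type} [Fintype L] [Fintype A] (M : POMDP L A O) (T : Set L)

lemma Cseq_zero_def : Cseq M T 0 = {B | B ⊆ T} := rfl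

lemma Cseq_succ_def (k : ℕ) : Cseq M T (k + 1) = {B | B ⊆ T ∧ ∃ a, M.post B a ⊆ T ∧
    ∀ o, (M.csplit B a o).Nonempty → M.csplit B a o ∈ Cseq M T k} := rfl

/-- Key quantitative lemma: from a belief support outside the winning sets
`Cseq M T k`, some state of the support violates safety within `k` steps with
probability at least `(c / |A|)^k`, whatever observation-based strategy is
played. -/
lemma lemA [Nonempty A] (c : ℝ≥0∞) (hc1 : c ≤ 1)
    (hcd : ∀ s a t, M.δ s a t ≠ 0 → c ≤ M.δ s a t) :
    ∀ (k : ℕ) (B : Set L) (σ : List (A × L) → PMF A), M.ObsB σ → B ∉ Cseq M T k →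
      ∃ s ∈ B, M.safeH T σ s k ≤ 1 - (c * (Fintype.card A : ℝ≥0∞)⁻¹) ^ k := by
  have hA0 : (Fintype.card A : ℝ≥0∞) ≠ 0 := by
    simp [Fintype.card_ne_zero]
  have hAt : (Fintype.card A : ℝ≥0∞) ≠ ⊤ := ENNReal.natCast_ne_top _
  have hinv1 : (Fintype.card A : ℝ≥0∞)⁻¹ ≤ 1 := by
    rw [ENNReal.inv_le_one]
    exact_mod_cast Nat.one_le_iff_ne_zero.2 Fintype.card_ne_zero
  set d := c * (Fintype.card A : ℝ≥0∞)⁻¹ with hd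
  have hd1 : d ≤ 1 := mul_le_one' hc1 hinv1
  intro k
  induction k with
  | zero =>
      intro B σ _ hB
      rw [Cseq_zero_def] at hB
      obtain ⟨s, hsB, hsT⟩ := Set.not_subset.1 hB
      exact ⟨s, hsB, by rw [M.safeH_of_not_mem T σ s 0 hsT]; exact zero_le'⟩
  | succ k ih =>
      intro B σ hσ hB
      -- the common core computation
      have core : ∀ a₀ : A, (Fintype.card A : ℝ≥0∞)⁻¹ ≤ σ [] a₀ →
          ∀ s₁ t' : L, M.δ s₁ a₀ t' ≠ 0 →
          M.safeH T (fun g => σ ((a₀, t') :: g)) t' k ≤ 1 - d ^ k →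
          M.safeH T σ s₁ (k + 1) ≤ 1 - d ^ (k + 1) := by
        intro a₀ ha₀ s₁ t' hδ hsH
        set x := σ [] a₀ * M.δ s₁ a₀ t' with hx
        have hx1 : x ≤ 1 := by
          calc x ≤ 1 * 1 := mul_le_mul' (PMF.coe_le_one _ _) (PMF.coe_le_one _ _)
            _ = 1 := one_mul 1
        have hxt : x ≠ ⊤ := (hx1.trans_lt ENNReal.one_lt_top).ne
        set g : A × L → ℝ≥0∞ := fun p => σ [] p.1 * M.δ s₁ p.1 p.2 with hg
        set f : A × L → ℝ≥0∞ :=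
          fun p => σ [] p.1 * M.δ s₁ p.1 p.2 *
            M.safeH T (fun g' => σ (p :: g')) p.2 k with hf
        have hmem : ((a₀, t') : A × L) ∈ (Finset.univ : Finset (A × L)) :=
          Finset.mem_univ _
        have herase : ∑ p ∈ Finset.univ.erase (a₀, t'), g p = 1 - x := by
          refine ENNReal.eq_sub_of_add_eq hxt ?_
          rw [add_comm]
          exact (Finset.add_sum_erase _ g hmem).trans (M.sum_pmf_mul (σ []) s₁)
        have hstep : M.safeH T σ s₁ (k + 1) ≤
            f (a₀, t') + ∑ p ∈ Finset.univ.erase (a₀, t'), f p := by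
          rw [M.safeH_succ]
          split_ifs with h
          · rw [← Finset.add_sum_erase _ f hmem]
          · exact zero_le'
        have hbound : f (a₀, t') + ∑ p ∈ Finset.univ.erase (a₀, t'), f p ≤
            x * (1 - d ^ k) + (1 - x) := by
          gcongr
          · show f (a₀, t') ≤ x * (1 - d ^ k)
            rw [hf, hx]
            exact mul_le_mul' le_rfl hsH
          · rw [← herase]
            refine Finset.sum_le_sum fun p _ => ?_
            calc f p ≤ g p * 1 := by
                  rw [hf, hg]
                  exact mul_le_mul' le_rfl (M.safeH_le_one T _ _ _)
              _ = g p := mul_one _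
        have hcollect : x * (1 - d ^ k) + (1 - x) = 1 - x * d ^ k := by
          rw [ENNReal.mul_sub (fun _ _ => hxt), mul_one, add_comm]
          exact tsub_add_tsub_cancel hx1 (by
            calc x * d ^ k ≤ x * 1 := mul_le_mul' le_rfl (pow_le_one' hd1 k)
              _ = x := mul_one x)
        have hlast : 1 - x * d ^ k ≤ 1 - d ^ (k + 1) := by
          refine tsub_le_tsub_left ?_ 1
          rw [pow_succ']
          exact mul_le_mul' (by
            rw [hd, hx, mul_comm]
            exact mul_le_mul' ha₀ (hcd _ _ _ hδ)) le_rfl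
        calc M.safeH T σ s₁ (k + 1) ≤ f (a₀, t') + ∑ p ∈ Finset.univ.erase (a₀, t'), f p :=
              hstep
          _ ≤ x * (1 - d ^ k) + (1 - x) := hbound
          _ = 1 - x * d ^ k := hcollect
          _ ≤ 1 - d ^ (k + 1) := hlast
      rw [Cseq_succ_def] at hB
      by_cases hBT : B ⊆ T
      · obtain ⟨a₀, -, ha₀max⟩ := Finset.exists_max_image Finset.univ (fun a => σ [] a)
          ⟨Classical.arbitrary A, Finset.mem_univ _⟩
        have h1 : (1 : ℝ≥0∞) ≤ (Fintype.card A : ℝ≥0∞) * σ [] a₀ := by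
          have htot := (σ []).tsum_coe
          rw [tsum_fintype] at htot
          calc (1 : ℝ≥0∞) = ∑ a : A, σ [] a := htot.symm
            _ ≤ ∑ _a : A, σ [] a₀ :=
                Finset.sum_le_sum fun a _ => ha₀max a (Finset.mem_univ a)
            _ = (Fintype.card A : ℝ≥0∞) * σ [] a₀ := by
                rw [Finset.sum_const, nsmul_eq_mul, Finset.card_univ]
        have hinv : (Fintype.card A : ℝ≥0∞)⁻¹ ≤ σ [] a₀ := by
          calc (Fintype.card A : ℝ≥0∞)⁻¹ = (Fintype.card A : ℝ≥0∞)⁻¹ * 1 :=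
                (mul_one _).symm
            _ ≤ (Fintype.card A : ℝ≥0∞)⁻¹ * ((Fintype.card A : ℝ≥0∞) * σ [] a₀) := by
                gcongr
            _ = σ [] a₀ := by rw [← mul_assoc, ENNReal.inv_mul_cancel hA0 hAt, one_mul]
        have hnot : ¬ (M.post B a₀ ⊆ T ∧
            ∀ o, (M.csplit B a₀ o).Nonempty → M.csplit B a₀ o ∈ Cseq M T k) := by
          intro hcon
          exact hB ⟨hBT, a₀, hcon.1, hcon.2⟩
        rcases not_and_or.1 hnot with hpost | hsplit
        · obtain ⟨t', hpost', ht'T⟩ := Set.not_subset.1 hpost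
          obtain ⟨s₁, hs₁B, hδ⟩ := hpost'
          refine ⟨s₁, hs₁B, core a₀ hinv s₁ t' hδ ?_⟩
          rw [M.safeH_of_not_mem T _ t' k ht'T]
          exact zero_le'
        · push_neg at hsplit
          obtain ⟨o, hne, hnotC⟩ := hsplit
          obtain ⟨s'₀, hs'₀⟩ := hne
          have hσ' : M.ObsB (fun g => σ ((a₀, s'₀) :: g)) :=
            M.ObsB_append hσ [(a₀, s'₀)]
          obtain ⟨s', hs'B', hs'H⟩ := ih _ _ hσ' hnotC
          have hobs : M.obs s' = M.obs s'₀ := by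
            rw [hs'B'.2, hs'₀.2]
          have hfun : (fun g => σ ((a₀, s') :: g)) = (fun g => σ ((a₀, s'₀) :: g)) := by
            funext g
            exact hσ _ _ (by simp) (by simp [hobs])
          obtain ⟨s₁, hs₁B, hδ⟩ := hs'B'.1
          refine ⟨s₁, hs₁B, core a₀ hinv s₁ s' hδ ?_⟩
          rw [hfun]
          exact hs'H
      · obtain ⟨s, hsB, hsT⟩ := Set.not_subset.1 hBT
        exact ⟨s, hsB, by rw [M.safeH_of_not_mem T σ s _ hsT]; exact zero_le'⟩

end POMDP

namespace POMDP

open Classical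

variable {L A O : Type} [Fintype L] [Fintype A] (M : POMDP L A O) (T : Set L)

/-- `DoomInv σ s`: along every safe consistent prefix from `s`, the singleton
belief at the end is outside the winning supports. -/
def DoomInv (σ : List (A × L) → PMF A) (s : L) : Prop :=
  ∀ h : List (A × L), (∀ x ∈ statesOf s h, x ∈ T) → M.prefProbAux σ s h ≠ 0 →
    {endSt s h} ∉ Cinf M T

lemma doomInv_shift {σ : List (A × L) → PMF A} {s : L} (hD : M.DoomInv T σ s)
    (h : List (A × L)) (hsafe : ∀ x ∈ statesOf s h, x ∈ T)
    (hpp : M.prefProbAux σ s h ≠ 0) :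
    M.DoomInv T (fun g => σ (h ++ g)) (endSt s h) := by
  intro g hg hppg
  have hsafe2 : ∀ x ∈ statesOf s (h ++ g), x ∈ T := by
    intro x hx
    rw [statesOf_append] at hx
    rcases List.mem_append.1 hx with hx | hx
    · exact hsafe x hx
    · exact hg x (by rw [statesOf]; exact List.mem_cons_of_mem _ hx)
  have hpp2 : M.prefProbAux σ s (h ++ g) ≠ 0 := by
    rw [M.prefProbAux_append]
    exact mul_ne_zero hpp hppg
  have := hD (h ++ g) hsafe2 hpp2
  rwa [endSt_append] at this

lemma lemK [Nonempty A] (R : ℕ) (hR : ∀ B : Set L, B ∉ Cinf M T → B ∉ Cseq M T R)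
    (c : ℝ≥0∞) (hc1 : c ≤ 1) (hcd : ∀ s a t, M.δ s a t ≠ 0 → c ≤ M.δ s a t) :
    ∀ (k : ℕ) (σ : List (A × L) → PMF A) (s : L), M.ObsB σ → M.DoomInv T σ s →
      M.safeH T σ s (k * R) ≤ (1 - (c * (Fintype.card A : ℝ≥0∞)⁻¹) ^ R) ^ k := by
  set d := c * (Fintype.card A : ℝ≥0∞)⁻¹ with hd
  set q := 1 - d ^ R with hq
  intro k
  induction k with
  | zero =>
      intro σ s _ _
      rw [zero_mul, pow_zero]
      exact M.safeH_le_one T σ s 0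
  | succ k ih =>
      intro σ s hσ hD
      have hbase : M.safeH T σ s R ≤ q := by
        by_cases hsT : s ∈ T
        · have hs : ({s} : Set L) ∉ Cseq M T R := by
            refine hR _ (hD [] ?_ ?_)
            · intro x hx
              rw [statesOf_nil, List.mem_singleton] at hx
              rw [hx]
              exact hsT
            · rw [prefProbAux_nil]
              exact one_ne_zero
          obtain ⟨s', hs', hle⟩ := M.lemA T c hc1 hcd R {s} σ hσ hs
          rw [Set.mem_singleton_iff] at hs'
          rw [← hs']
          exact hle
        · rw [M.safeH_of_not_mem T σ s _ hsT]
          exact zero_le'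
      have harith : (k + 1) * R = R + k * R := by ring
      rw [harith, M.safeH_add T R (k * R) σ s]
      calc ∑ f : Fin R → A × L,
            (if ∀ x ∈ statesOf s (List.ofFn f), x ∈ T then
              M.prefProbAux σ s (List.ofFn f) *
                M.safeH T (fun g => σ (List.ofFn f ++ g)) (endSt s (List.ofFn f)) (k * R)
            else 0)
          ≤ ∑ f : Fin R → A × L,
            (if ∀ x ∈ statesOf s (List.ofFn f), x ∈ T then
              M.prefProbAux σ s (List.ofFn f) * q ^ k else 0) := by
            refine Finset.sum_le_sum fun f _ => ?_
            split_ifs with hsafe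
            · by_cases hpp : M.prefProbAux σ s (List.ofFn f) = 0
              · rw [hpp, zero_mul, zero_mul]
              · refine mul_le_mul' le_rfl ?_
                exact ih _ _ (M.ObsB_append hσ (List.ofFn f))
                  (M.doomInv_shift T hD (List.ofFn f) hsafe hpp)
            · exact le_rfl
        _ = (∑ f : Fin R → A × L,
              (if ∀ x ∈ statesOf s (List.ofFn f), x ∈ T then
                M.prefProbAux σ s (List.ofFn f) else 0)) * q ^ k := by
            rw [Finset.sum_mul]
            refine Finset.sum_congr rfl fun f _ => ?_
            split_ifs with hsafe
            · rfl
            · rw [zero_mul]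
        _ ≤ q * q ^ k := by
            exact mul_le_mul' hbase le_rfl
        _ = q ^ (k + 1) := (pow_succ' q k).symm

/-- From a positively winning observation-based strategy, extract a safe
consistent prefix whose end state has winning singleton belief support. -/
lemma exists_good_prefix [Nonempty A] (α : Strategy L A) (l : L)
    (hobs : M.ObservationBased α) (hpos : 0 < M.safeProb α l T) :
    ∃ h : List (A × L), (∀ x ∈ statesOf l h, x ∈ T) ∧ M.prefProb α l h ≠ 0 ∧
      {endSt l h} ∈ Cinf M T := by
  by_contra hcon
  push_neg at hcon
  have hD : M.DoomInv T (α l) l := fun h h1 h2 => hcon h h1 h2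
  have hσ : M.ObsB (α l) := fun h h' h1 h2 => hobs l l h h' rfl h1 h2
  obtain ⟨R, hR⟩ := M.exists_uniform_rank T
  obtain ⟨c, hc0, hc1, hcd⟩ := M.exists_pmin l
  set d := c * (Fintype.card A : ℝ≥0∞)⁻¹ with hd
  set q := 1 - d ^ R with hq
  have hple : ∀ k : ℕ, M.safeProb α l T ≤ q ^ k := by
    intro k
    calc M.safeProb α l T ≤
        M.horizonProb α l (k * R) (fun h => ∀ s ∈ statesOf l h, s ∈ T) :=
          iInf_le _ (k * R)
      _ = M.safeH T (α l) l (k * R) := M.horizonProb_safe_eq T α l (k * R)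
      _ ≤ q ^ k := M.lemK T R hR c hc1 hcd k (α l) l hσ hD
  have hd0 : d ≠ 0 := by
    rw [hd]
    exact mul_ne_zero (pos_iff_ne_zero.1 hc0) (ENNReal.inv_ne_zero.2 (ENNReal.natCast_ne_top _))
  have hq1 : q < 1 := by
    rw [hq]
    exact ENNReal.sub_lt_self ENNReal.one_ne_top one_ne_zero (pow_ne_zero R hd0)
  obtain ⟨k, hk⟩ := (Filter.Tendsto.eventually_lt_const hpos
    (ENNReal.tendsto_pow_atTop_nhds_zero_of_lt_one hq1)).exists
  exact absurd (hple k) (not_le.2 hk)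

end POMDP

namespace POMDP

open Classical

variable {L A O : Type} [Fintype L] [Fintype A] (M : POMDP L A O) (T : Set L)

/-- A finite walk in the graph of the POMDP staying in `T`. -/
def GWalk (M : POMDP L A O) (T : Set L) : L → List (A × L) → Prop
  | t, [] => t ∈ T
  | t, (a, t') :: g => t ∈ T ∧ M.δ t a t' ≠ 0 ∧ GWalk M T t' g

lemma gwalk_head_mem {t : L} {h : List (A × L)} (hw : GWalk M T t h) : t ∈ T := by
  cases h with
  | nil => exact hw
  | cons p g => cases p; exact hw.1

lemma gwalk_mem {t : L} {h : List (A × L)} (hw : GWalk M T t h) :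
    ∀ x ∈ statesOf t h, x ∈ T := by
  induction h generalizing t with
  | nil =>
      intro x hx
      rw [statesOf_nil, List.mem_singleton] at hx
      rw [hx]; exact hw
  | cons p g ih =>
      cases p with | mk a t' =>
      intro x hx
      rw [statesOf_cons] at hx
      rcases List.mem_cons.1 hx with rfl | hx
      · exact hw.1
      · exact ih hw.2.2 x hx

lemma gwalk_append_iff (t : L) (g₁ g₂ : List (A × L)) :
    GWalk M T t (g₁ ++ g₂) ↔ GWalk M T t g₁ ∧ GWalk M T (endSt t g₁) g₂ := by
  induction g₁ generalizing t with
  | nil =>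
      simp only [List.nil_append, endSt_nil]
      exact ⟨fun hw => ⟨M.gwalk_head_mem T hw, hw⟩, fun hw => hw.2⟩
  | cons p g ih =>
      cases p with | mk a t' =>
      simp only [List.cons_append, endSt_cons]
      constructor
      · rintro ⟨h1, h2, h3⟩
        obtain ⟨h4, h5⟩ := (ih t').1 h3
        exact ⟨⟨h1, h2, h4⟩, h5⟩
      · rintro ⟨⟨h1, h2, h4⟩, h5⟩
        exact ⟨h1, h2, (ih t').2 ⟨h4, h5⟩⟩

lemma gwalk_of_pp {σ : List (A × L) → PMF A} {t : L} {h : List (A × L)}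
    (hsafe : ∀ x ∈ statesOf t h, x ∈ T) (hpp : M.prefProbAux σ t h ≠ 0) :
    GWalk M T t h := by
  induction h generalizing σ t with
  | nil =>
      exact hsafe t (by rw [statesOf_nil]; exact List.mem_singleton_self t)
  | cons p g ih =>
      cases p with | mk a t' =>
      rw [prefProbAux_cons] at hpp
      have h1 := mul_ne_zero_iff.1 hpp
      have h2 := mul_ne_zero_iff.1 h1.1
      refine ⟨hsafe t (by rw [statesOf_cons]; exact List.mem_cons_self), h2.2, ?_⟩
      refine ih (fun x hx => hsafe x ?_) h1.2
      rw [statesOf_cons]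
      exact List.mem_cons_of_mem _ hx

lemma length_statesOf (t : L) (h : List (A × L)) :
    (statesOf t h).length = h.length + 1 := by
  simp [statesOf]

lemma endSt_take (h : List (A × L)) (j : ℕ) (t : L)
    (hj : j < (statesOf t h).length) :
    endSt t (h.take j) = (statesOf t h).get ⟨j, hj⟩ := by
  induction h generalizing j t with
  | nil =>
      rw [length_statesOf, List.length_nil] at hj
      have : j = 0 := by omega
      subst this
      simp [statesOf]
  | cons p g ih =>
      cases p with | mk a t' =>
      cases j with
      | zero => simp [statesOf]
      | succ j =>
          have hj' : j < (statesOf t' g).length := by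
            rw [length_statesOf] at hj ⊢
            simp only [List.length_cons] at hj
            omega
          simp only [List.take_succ_cons, endSt_cons]
          rw [ih j t' hj']
          simp [statesOf]

lemma exists_nodup_walk :
    ∀ (n : ℕ) (t : L) (h : List (A × L)), h.length ≤ n → GWalk M T t h →
      ∃ h', GWalk M T t h' ∧ (statesOf t h').Nodup ∧ endSt t h' = endSt t h := by
  intro n
  induction n with
  | zero =>
      intro t h hlen hw
      rw [Nat.le_zero, List.length_eq_zero_iff] at hlen
      subst hlen
      refine ⟨[], hw, ?_, rfl⟩
      rw [statesOf_nil]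
      exact List.nodup_singleton t
  | succ n ih =>
      intro t h hlen hw
      by_cases hnd : (statesOf t h).Nodup
      · exact ⟨h, hw, hnd, rfl⟩
      · rw [List.Nodup, List.pairwise_iff_get] at hnd
        push_neg at hnd
        obtain ⟨i, j, hij, hget⟩ := hnd
        have hslen : (statesOf t h).length = h.length + 1 := length_statesOf t h
        have hjl : (j : ℕ) < h.length + 1 := lt_of_lt_of_le j.isLt (le_of_eq hslen)
        have hij' : (i : ℕ) < (j : ℕ) := hij
        have hjlen : (j : ℕ) ≤ h.length := by omega
        have hilen : (i : ℕ) < h.length := by omega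
        set h'' := h.take i ++ h.drop j with hh''
        -- h decomposes at j
        have hdecomp : h = h.take j ++ h.drop j := (List.take_append_drop _ h).symm
        have hwj : GWalk M T t (h.take j) ∧ GWalk M T (endSt t (h.take j)) (h.drop j) := by
          rw [← gwalk_append_iff, ← hdecomp]
          exact hw
        -- take i is a prefix of take j
        have hdecompi : h.take j = h.take i ++ ((h.take j).drop i) := by
          conv_lhs => rw [← List.take_append_drop i (h.take j)]
          rw [List.take_take, min_eq_left (le_of_lt hij')]
        have hwi : GWalk M T t (h.take i) := by
          have := (gwalk_append_iff M T t (h.take i) ((h.take j).drop i)).1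
            (by rw [← hdecompi]; exact hwj.1)
          exact this.1
        have hends : endSt t (h.take i) = endSt t (h.take j) := by
          rw [endSt_take h (↑i) t i.isLt, endSt_take h (↑j) t j.isLt]
          exact hget
        have hw'' : GWalk M T t h'' := by
          rw [hh'', gwalk_append_iff]
          exact ⟨hwi, by rw [hends]; exact hwj.2⟩
        have hend'' : endSt t h'' = endSt t h := by
          rw [hh'', endSt_append, hends, ← endSt_append, ← hdecomp]
        have hlen'' : h''.length ≤ n := by
          rw [hh'', List.length_append, List.length_take, List.length_drop,
            min_eq_left (le_of_lt hilen)]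
          omega
        obtain ⟨h', hw', hnd', hend'⟩ := ih t h'' hlen'' hw''
        exact ⟨h', hw', hnd', by rw [hend', hend'']⟩

end POMDP

namespace POMDP

open Classical

variable {L A O : Type} [Fintype L] [Fintype A] (M : POMDP L A O) (T : Set L)

lemma memRun_append {Mem : Type} (u : Mem → O → A → Mem) (m : Mem) (t : L)
    (h g : List (A × L)) :
    M.memRun u m t (h ++ g) =
      M.memRun u (M.memRun u m t h).1 (M.memRun u m t h).2 g := by
  induction h generalizing m t with
  | nil => rfl
  | cons p h ih => cases p with | mk a t' => simp only [List.cons_append, memRun]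
                                             exact ih _ _

lemma memRun_snd {Mem : Type} (u : Mem → O → A → Mem) (m : Mem) (t : L)
    (h : List (A × L)) : (M.memRun u m t h).2 = endSt t h := by
  induction h generalizing m t with
  | nil => rfl
  | cons p h ih => cases p with | mk a t' => simp only [memRun, endSt_cons]
                                             exact ih _ _

lemma fmStrategy_cons {Mem : Type} (u : Mem → O → A → Mem) (nx : Mem → O → PMF A)
    (m : Mem) (t t' : L) (a : A) :
    (fun h' => M.fmStrategy u nx m t ((a, t') :: h')) =
      (M.fmStrategy u nx (u m (M.obs t) a)) t' := rfl

lemma fmStrategy_shift {Mem : Type} (u : Mem → O → A → Mem) (nx : Mem → O → PMF A)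
    (m : Mem) (t : L) (h : List (A × L)) :
    (fun g => M.fmStrategy u nx m t (h ++ g)) =
      (M.fmStrategy u nx (M.memRun u m t h).1) (endSt t h) := by
  funext g
  show M.fmStrategy u nx m t (h ++ g) = _
  unfold fmStrategy
  rw [M.memRun_append u m t h g, M.memRun_snd u m t h]

lemma memRun_obs {Mem : Type} (u : Mem → O → A → Mem) :
    ∀ (h h' : List (A × L)) (t t' : L) (m : Mem),
      M.obs t = M.obs t' → h.map Prod.fst = h'.map Prod.fst →
      h.map (fun p => M.obs p.2) = h'.map (fun p => M.obs p.2) →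
      (M.memRun u m t h).1 = (M.memRun u m t' h').1 ∧
        M.obs (M.memRun u m t h).2 = M.obs (M.memRun u m t' h').2 := by
  intro h
  induction h with
  | nil =>
      intro h' t t' m ho h1 h2
      cases h' with
      | nil => exact ⟨rfl, ho⟩
      | cons q h' => simp at h1
  | cons p h ih =>
      intro h' t t' m ho h1 h2
      cases h' with
      | nil => simp at h1
      | cons q g' =>
          cases p with | mk a s =>
          cases q with | mk a' s' =>
          simp only [List.map_cons, List.cons.injEq] at h1 h2
          obtain ⟨ha, h1⟩ := h1
          obtain ⟨hs, h2⟩ := h2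
          subst ha
          simp only [memRun]
          rw [ho]
          exact ih g' s s' _ hs h1 h2

lemma fmStrategy_obsBased {Mem : Type} (u : Mem → O → A → Mem)
    (nx : Mem → O → PMF A) (m0 : Mem) :
    M.ObservationBased (M.fmStrategy u nx m0) := by
  intro t t' h h' ho h1 h2
  obtain ⟨hm, hoe⟩ := M.memRun_obs u h h' t t' m0 ho h1 h2
  show nx (M.memRun u m0 t h).1 (M.obs (M.memRun u m0 t h).2) =
    nx (M.memRun u m0 t' h').1 (M.obs (M.memRun u m0 t' h').2)
  rw [hm, hoe]

variable [Nonempty A]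

/-- Selection of a good action for a winning belief support. -/
noncomputable def aSel (B : Set L) : A :=
  if h : ∃ a, M.post B a ⊆ T ∧ ∀ o, (M.csplit B a o).Nonempty →
      M.csplit B a o ∈ Cinf M T
  then h.choose else Classical.arbitrary A

lemma aSel_spec {B : Set L} (hB : B ∈ Cinf M T) :
    M.post B (M.aSel T B) ⊆ T ∧ ∀ o, (M.csplit B (M.aSel T B) o).Nonempty →
      M.csplit B (M.aSel T B) o ∈ Cinf M T := by
  have h := M.Cinf_step T hB
  rw [aSel, dif_pos h]
  exact h.choose_spec

/-- Next-action function of the constructed machine. -/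
noncomputable def trNext (l : L) (hw : List (A × L)) :
    Option L × Set L → O → A := fun m o =>
  match m.1 with
  | some t =>
      match hw[(statesOf l hw).idxOf t]? with
      | some pr => pr.1
      | none => Classical.arbitrary A
  | none => M.aSel T (m.2 ∩ {s | M.obs s = o})

/-- Memory-update function of the constructed machine. -/
noncomputable def trU (l : L) (hw : List (A × L)) :
    Option L × Set L → O → A → Option L × Set L := fun m o a =>
  match m.1 with
  | some t =>
      if (statesOf l hw).idxOf t + 1 = hw.length then (none, {endSt l hw})
      else
        match (statesOf l hw)[(statesOf l hw).idxOf t + 1]? with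
        | some t' => (some t', ∅)
        | none => (none, ∅)
  | none => (none, M.post (m.2 ∩ {s | M.obs s = o}) a)

/-- Initial memory of the constructed machine. -/
noncomputable def trM0 (l : L) (hw : List (A × L)) : Option L × Set L :=
  if hw.length = 0 then (none, {endSt l hw}) else (some l, ∅)

/-- Intended memory content after `j` steps along the walk. -/
noncomputable def memAt (l : L) (hw : List (A × L)) (j : ℕ) : Option L × Set L :=
  if hj : j < hw.length then
    (some ((statesOf l hw).get ⟨j, by rw [length_statesOf]; omega⟩), ∅)
  else (none, {endSt l hw})

end POMDP

namespace POMDP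

open Classical

variable {L A O : Type} [Fintype L] [Fintype A] (M : POMDP L A O) (T : Set L)

lemma statesOf_get_zero (t : L) (h : List (A × L))
    (h0 : 0 < (statesOf t h).length) : (statesOf t h).get ⟨0, h0⟩ = t := rfl

lemma statesOf_get_succ (t : L) (h : List (A × L)) (j : ℕ) (hj : j < h.length)
    (hj' : j + 1 < (statesOf t h).length) :
    (statesOf t h).get ⟨j + 1, hj'⟩ = (h.get ⟨j, hj⟩).2 := by
  simp [statesOf]

lemma gwalk_get {t : L} {h : List (A × L)} (hw : GWalk M T t h) :
    ∀ (j : ℕ) (hj : j < h.length) (hj2 : j < (statesOf t h).length),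
      M.δ ((statesOf t h).get ⟨j, hj2⟩) (h.get ⟨j, hj⟩).1 (h.get ⟨j, hj⟩).2 ≠ 0 := by
  induction h generalizing t with
  | nil => intro j hj hj2; simp at hj
  | cons p g ih =>
      cases p with | mk a t' =>
      intro j hj hj2
      cases j with
      | zero => simpa [statesOf] using hw.2.1
      | succ j =>
          have hj' : j < g.length := by simpa using Nat.lt_of_succ_lt_succ hj
          have hj2' : j < (statesOf t' g).length := by
            rw [length_statesOf]; omega
          have := ih hw.2.2 j hj' hj2'
          simpa [statesOf] using this

lemma csplit_eq (B : Set L) (a : A) (o : O) :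
    M.csplit B a o = M.post B a ∩ {s | M.obs s = o} := rfl

variable [Nonempty A]

lemma runSpec (l : L) (hw : List (A × L)) (hgw : GWalk M T l hw)
    (hnd : (statesOf l hw).Nodup) :
    ∀ j, j ≤ hw.length →
      (M.memRun (M.trU l hw) (trM0 l hw) l (hw.take j)).1 = memAt l hw j ∧
      M.prefProbAux ((M.fmStrategy (M.trU l hw)
          (fun m o => PMF.pure (M.trNext T l hw m o)) (trM0 l hw)) l) l
        (hw.take j) ≠ 0 := by
  intro j
  induction j with
  | zero =>
      intro _
      rw [List.take_zero]
      constructor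
      · show trM0 l hw = memAt l hw 0
        rw [trM0, memAt]
        by_cases h0 : hw.length = 0
        · rw [if_pos h0, dif_neg (by omega)]
        · rw [if_neg h0, dif_pos (by omega)]
          rfl
      · rw [prefProbAux_nil]; exact one_ne_zero
  | succ j ih =>
      intro hj
      have hjlt : j < hw.length := by omega
      have hsj : j < (statesOf l hw).length := by rw [length_statesOf]; omega
      have hsj1 : j + 1 < (statesOf l hw).length := by rw [length_statesOf]; omega
      obtain ⟨ihm, ihp⟩ := ih (by omega)
      have htake : hw.take (j + 1) = hw.take j ++ [hw.get ⟨j, hjlt⟩] := by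
        rw [List.take_succ, List.getElem?_eq_getElem hjlt]
        rfl
      have hendj : endSt l (hw.take j) = (statesOf l hw).get ⟨j, hsj⟩ :=
        endSt_take hw j l hsj
      have hidx : (statesOf l hw).idxOf ((statesOf l hw).get ⟨j, hsj⟩) = j :=
        List.get_idxOf hnd ⟨j, hsj⟩
      -- the strategy's choice after (take j)
      have hmem2 : (M.memRun (M.trU l hw) (trM0 l hw) l (hw.take j)).1 =
          (some ((statesOf l hw).get ⟨j, hsj⟩), (∅ : Set L)) := by
        rw [ihm, memAt, dif_pos hjlt]
      have htrn : M.trNext T l hw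
          (some ((statesOf l hw).get ⟨j, hsj⟩), (∅ : Set L))
          (M.obs ((statesOf l hw).get ⟨j, hsj⟩)) = (hw.get ⟨j, hjlt⟩).1 := by
        rw [trNext]
        simp only [hidx]
        rw [List.getElem?_eq_getElem hjlt]; rfl
      have hstrat : (M.fmStrategy (M.trU l hw)
          (fun m o => PMF.pure (M.trNext T l hw m o)) (trM0 l hw)) l (hw.take j) =
          PMF.pure (hw.get ⟨j, hjlt⟩).1 := by
        show PMF.pure (M.trNext T l hw
            (M.memRun (M.trU l hw) (trM0 l hw) l (hw.take j)).1
            (M.obs (M.memRun (M.trU l hw) (trM0 l hw) l (hw.take j)).2)) = _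
        rw [hmem2, M.memRun_snd, hendj, htrn]
      -- the memory update after one more step
      have humem : M.trU l hw (memAt l hw j)
          (M.obs ((statesOf l hw).get ⟨j, hsj⟩)) (hw.get ⟨j, hjlt⟩).1 =
          memAt l hw (j + 1) := by
        rw [memAt, dif_pos hjlt]
        show M.trU l hw
          (some ((statesOf l hw).get ⟨j, by rw [length_statesOf]; omega⟩), ∅) _ _ = _
        rw [trU]
        simp only [hidx]
        by_cases hlast : j + 1 = hw.length
        · rw [if_pos hlast, memAt, dif_neg (by omega)]
        · rw [if_neg hlast, List.getElem?_eq_getElem hsj1, memAt,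
            dif_pos (by omega)]; rfl
      constructor
      · rw [htake, M.memRun_append, M.memRun_snd, hendj, ihm]
        show (M.trU l hw (memAt l hw j) _ _, _).1 = _
        rw [humem]
      · rw [htake, M.prefProbAux_append, hendj]
        refine mul_ne_zero ihp ?_
        rw [prefProbAux_cons]
        refine mul_ne_zero (mul_ne_zero ?_ ?_) ?_
        · rw [List.append_nil, hstrat, PMF.pure_apply, if_pos rfl]
          exact one_ne_zero
        · exact M.gwalk_get T hgw j hjlt hsj
        · rw [prefProbAux_nil]; exact one_ne_zero

lemma beliefSpec (l : L) (hw : List (A × L)) :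
    ∀ (g : List (A × L)) (P : Set L) (t : L), t ∈ P →
      (P ∩ {s | M.obs s = M.obs t}) ∈ Cinf M T →
      M.prefProbAux ((M.fmStrategy (M.trU l hw)
          (fun m o => PMF.pure (M.trNext T l hw m o)) (none, P)) t) t g ≠ 0 →
      ∀ x ∈ statesOf t g, x ∈ T := by
  intro g
  induction g with
  | nil =>
      intro P t htP hB _ x hx
      rw [statesOf_nil, List.mem_singleton] at hx
      subst hx
      exact M.Cinf_subset_T T hB ⟨htP, rfl⟩
  | cons p g ih =>
      cases p with | mk a t' =>
      intro P t htP hB hpp x hx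
      rw [prefProbAux_cons] at hpp
      have h1 := mul_ne_zero_iff.1 hpp
      have h2 := mul_ne_zero_iff.1 h1.1
      have ha : a = M.aSel T (P ∩ {s | M.obs s = M.obs t}) := by
        have h3 := h2.1
        have h4 : (M.fmStrategy (M.trU l hw)
            (fun m o => PMF.pure (M.trNext T l hw m o)) (none, P)) t [] =
            PMF.pure (M.aSel T (P ∩ {s | M.obs s = M.obs t})) := by
          show PMF.pure (M.trNext T l hw (none, P) (M.obs t)) = _
          rfl
        rw [h4, PMF.pure_apply] at h3
        by_contra hne
        rw [if_neg hne] at h3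
        exact h3 rfl
      have hδ : M.δ t a t' ≠ 0 := h2.2
      have haSel := M.aSel_spec T hB
      have ht'post : t' ∈ M.post (P ∩ {s | M.obs s = M.obs t})
          (M.aSel T (P ∩ {s | M.obs s = M.obs t})) :=
        ⟨t, ⟨htP, rfl⟩, ha ▸ hδ⟩
      rw [statesOf_cons] at hx
      rcases List.mem_cons.1 hx with rfl | hx
      · exact M.Cinf_subset_T T hB ⟨htP, rfl⟩
      · refine ih (M.post (P ∩ {s | M.obs s = M.obs t})
            (M.aSel T (P ∩ {s | M.obs s = M.obs t}))) t' ht'post ?_ ?_ x hx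
        · have := haSel.2 (M.obs t') ⟨t', ht'post, rfl⟩
          rwa [csplit_eq] at this
        · have heq : (fun h' => (M.fmStrategy (M.trU l hw)
              (fun m o => PMF.pure (M.trNext T l hw m o)) (none, P)) t
                ((a, t') :: h')) =
              (M.fmStrategy (M.trU l hw)
                (fun m o => PMF.pure (M.trNext T l hw m o))
                (none, M.post (P ∩ {s | M.obs s = M.obs t})
                  (M.aSel T (P ∩ {s | M.obs s = M.obs t})))) t' := by
            rw [M.fmStrategy_cons]
            have harg : M.trU l hw (none, P) (M.obs t) a =
                (none, M.post (P ∩ {s | M.obs s = M.obs t})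
                  (M.aSel T (P ∩ {s | M.obs s = M.obs t}))) := by
              rw [ha]
              rfl
            rw [harg]
          rw [← heq]
          exact h1.2
end POMDP

namespace POMDP

open Classical

variable {L A O : Type} [Fintype L] [Fintype A] (M : POMDP L A O) (T : Set L)

lemma ofFn_mk (h : List (A × L)) (n : ℕ) (hn : h.length = n) :
    List.ofFn (fun i : Fin n => h.get (Fin.cast hn.symm i)) = h := by
  subst hn
  exact List.ofFn_get h

variable [Nonempty A]

lemma machine_pos (l : L) (hw : List (A × L)) (hgw : GWalk M T l hw)
    (hnd : (statesOf l hw).Nodup) (he : {endSt l hw} ∈ Cinf M T) :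
    0 < M.safeProb (M.fmStrategy (M.trU l hw)
      (fun m o => PMF.pure (M.trNext T l hw m o)) (trM0 l hw)) l T := by
  set β := M.fmStrategy (M.trU l hw)
    (fun m o => PMF.pure (M.trNext T l hw m o)) (trM0 l hw) with hβ
  have hppw : M.prefProbAux (β l) l hw ≠ 0 := by
    have := (M.runSpec T l hw hgw hnd hw.length le_rfl).2
    rwa [List.take_length] at this
  have hmw : (M.memRun (M.trU l hw) (trM0 l hw) l hw).1 =
      ((none : Option L), ({endSt l hw} : Set L)) := by
    have := (M.runSpec T l hw hgw hnd hw.length le_rfl).1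
    rw [List.take_length] at this
    rw [this, memAt, dif_neg (lt_irrefl _)]
  have hshift : (fun g => (β l) (hw ++ g)) =
      (M.fmStrategy (M.trU l hw) (fun m o => PMF.pure (M.trNext T l hw m o))
        ((none : Option L), ({endSt l hw} : Set L))) (endSt l hw) := by
    rw [hβ]
    rw [M.fmStrategy_shift, hmw]
  have hclose : ∀ g, M.prefProbAux ((M.fmStrategy (M.trU l hw)
        (fun m o => PMF.pure (M.trNext T l hw m o))
        ((none : Option L), ({endSt l hw} : Set L))) (endSt l hw))
        (endSt l hw) g ≠ 0 →
      ∀ x ∈ statesOf (endSt l hw) g, x ∈ T := by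
    intro g hpp
    refine M.beliefSpec T l hw g {endSt l hw} (endSt l hw) rfl ?_ hpp
    have hi : ({endSt l hw} : Set L) ∩ {s | M.obs s = M.obs (endSt l hw)} =
        {endSt l hw} := by
      ext x
      constructor
      · exact fun hx => hx.1
      · intro hx
        rw [Set.mem_singleton_iff] at hx
        exact ⟨hx, by rw [Set.mem_setOf_eq, hx]⟩
    rw [hi]
    exact he
  have hone : ∀ k, M.safeH T ((M.fmStrategy (M.trU l hw)
      (fun m o => PMF.pure (M.trNext T l hw m o))
      ((none : Option L), ({endSt l hw} : Set L))) (endSt l hw)) (endSt l hw) k = 1 := by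
    intro k
    have h1 : M.safeH T ((M.fmStrategy (M.trU l hw)
        (fun m o => PMF.pure (M.trNext T l hw m o))
        ((none : Option L), ({endSt l hw} : Set L))) (endSt l hw)) (endSt l hw) k =
        ∑ f : Fin k → A × L, M.prefProbAux ((M.fmStrategy (M.trU l hw)
          (fun m o => PMF.pure (M.trNext T l hw m o))
          ((none : Option L), ({endSt l hw} : Set L))) (endSt l hw)) (endSt l hw)
          (List.ofFn f) := by
      rw [safeH]
      refine Finset.sum_congr rfl fun f _ => ?_
      by_cases hpp : M.prefProbAux ((M.fmStrategy (M.trU l hw)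
          (fun m o => PMF.pure (M.trNext T l hw m o))
          ((none : Option L), ({endSt l hw} : Set L))) (endSt l hw)) (endSt l hw)
          (List.ofFn f) = 0
      · rw [hpp]
        split_ifs <;> rfl
      · rw [if_pos (hclose (List.ofFn f) hpp)]
    rw [h1, M.sum_prefProbAux_eq_one]
  have hbound : ∀ n, M.prefProbAux (β l) l hw ≤
      M.horizonProb β l n (fun h => ∀ s ∈ statesOf l h, s ∈ T) := by
    intro n
    rw [M.horizonProb_safe_eq T β l n]
    rcases le_or_gt n hw.length with hn | hn
    · -- truncation case
      have hlen0 : (hw.take n).length = n := by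
        rw [List.length_take]
        omega
      set f0 : Fin n → A × L := fun i => (hw.take n).get (Fin.cast hlen0.symm i) with hf0
      have hof : List.ofFn f0 = hw.take n := ofFn_mk (hw.take n) n hlen0
      have hdec : hw = hw.take n ++ hw.drop n := (List.take_append_drop n hw).symm
      have hgwn : GWalk M T l (hw.take n) := by
        have := (gwalk_append_iff M T l (hw.take n) (hw.drop n)).1
          (by rw [← hdec]; exact hgw)
        exact this.1
      have hple : M.prefProbAux (β l) l hw ≤ M.prefProbAux (β l) l (hw.take n) := by
        conv_lhs => rw [hdec]
        rw [M.prefProbAux_append]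
        calc M.prefProbAux (β l) l (hw.take n) *
              M.prefProbAux _ (endSt l (hw.take n)) (hw.drop n)
            ≤ M.prefProbAux (β l) l (hw.take n) * 1 :=
              mul_le_mul' le_rfl (M.prefProbAux_le_one _ _ _)
          _ = M.prefProbAux (β l) l (hw.take n) := mul_one _
      refine hple.trans ?_
      rw [safeH]
      have hterm := Finset.single_le_sum (f := fun f : Fin n → A × L =>
        if ∀ x ∈ statesOf l (List.ofFn f), x ∈ T then
          M.prefProbAux (β l) l (List.ofFn f) else 0)
        (fun i _ => zero_le') (Finset.mem_univ f0)
      refine le_trans ?_ hterm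
      simp only [hof]
      rw [if_pos (M.gwalk_mem T hgwn)]
    · -- extension case
      obtain ⟨k, rfl⟩ : ∃ k, n = hw.length + k := ⟨n - hw.length, by omega⟩
      rw [M.safeH_add T hw.length k (β l) l]
      set f0 : Fin hw.length → A × L := hw.get with hf0
      have hof : List.ofFn f0 = hw := List.ofFn_get hw
      have hterm := Finset.single_le_sum (f := fun f : Fin hw.length → A × L =>
        if ∀ x ∈ statesOf l (List.ofFn f), x ∈ T then
          M.prefProbAux (β l) l (List.ofFn f) *
            M.safeH T (fun g => (β l) (List.ofFn f ++ g)) (endSt l (List.ofFn f)) k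
        else 0)
        (fun i _ => zero_le') (Finset.mem_univ f0)
      refine le_trans ?_ hterm
      simp only [hof]
      rw [if_pos (M.gwalk_mem T hgw), hshift, hone, mul_one]
  have hpos' : 0 < M.prefProbAux (β l) l hw := pos_iff_ne_zero.2 hppw
  exact lt_of_lt_of_le hpos' (le_iInf hbound)

end POMDP

/-- If there is an observation-based strategy positive winning for
`Safe(T)` from `l`, then there is a pure observation-based finite-memory
strategy, with memory of size at most `(|L|+1) · 2^{|L|}`, that is positive
winning for `Safe(T)` from `l`. -/
theorem positive_safe_pure_exponential_memory {L A O : Type} [Fintype L] [Fintype A]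
    (M : POMDP L A O) (T : Set L) (l : L)
    (h : ∃ α : POMDP.Strategy L A, M.ObservationBased α ∧ 0 < M.safeProb α l T) :
    ∃ (Mem : Type) (iM : Fintype Mem) (m0 : Mem) (u : Mem → O → A → Mem)
      (next : Mem → O → A),
      @Fintype.card Mem iM ≤ (Fintype.card L + 1) * 2 ^ Fintype.card L ∧
      POMDP.PureStrategy (M.fmStrategy u (fun m o => PMF.pure (next m o)) m0) ∧
      M.ObservationBased (M.fmStrategy u (fun m o => PMF.pure (next m o)) m0) ∧
      0 < M.safeProb (M.fmStrategy u (fun m o => PMF.pure (next m o)) m0) l T := by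
  classical
  obtain ⟨α, hobs, hpos⟩ := h
  have hA : Nonempty A := ⟨((α l []).support_nonempty).choose⟩
  obtain ⟨h₁, hsafe₁, hpp₁, he₁⟩ := M.exists_good_prefix T α l hobs hpos
  have hgw₁ : M.GWalk T l h₁ := M.gwalk_of_pp T hsafe₁ hpp₁
  obtain ⟨hw, hgw, hnd, hend⟩ := M.exists_nodup_walk T h₁.length l h₁ le_rfl hgw₁
  rw [← hend] at he₁
  refine ⟨Option L × Set L, inferInstance, POMDP.trM0 l hw, M.trU l hw,
    M.trNext T l hw, ?_, ?_, ?_, ?_⟩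
  · rw [Fintype.card_prod, Fintype.card_option, Fintype.card_set]
  · intro t hh
    exact ⟨M.trNext T l hw
      (M.memRun (M.trU l hw) (POMDP.trM0 l hw) t hh).1
      (M.obs (M.memRun (M.trU l hw) (POMDP.trM0 l hw) t hh).2), rfl⟩
  · exact M.fmStrategy_obsBased _ _ _
  · exact M.machine_pos T l hw hgw hnd he₁
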